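/- Let G = (V,E) be an infinite, locally finite tree (a connected acyclic simple graph) in which every vertex has degree at least 2, equipped with edge lengths ℓ : E → (0,∞). Let U ⊆ V be a finite, nonempty, connected vertex set and let G̃ be the star-like subgraph with edge set Ẽ := ⋃_{v∈U} E_v. For an edge e with endpoints u and v set c(e) := 1/ℓ(e) − 1/m(u) − 1/m(v). Then Σ_{e∈Ẽ} c(e)·ℓ(e) ≤ deg(∂G̃). -/

import Mathlib

open scoped BigOperators

noncomputable section

variable {V : Type*}

/-- Total length of a set of edges. -/
def mes (ℓ : Sym2 V → ℝ) (E : Set (Sym2 V)) : ℝ := ∑ᶠ e ∈ E, ℓ e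

/-- Weight `m(v)` of a vertex: total length of the edges incident to `v`. -/
def mval (G : SimpleGraph V) (ℓ : Sym2 V → ℝ) (v : V) : ℝ := ∑ᶠ e ∈ G.incidenceSet v, ℓ e

/-- Characteristic value of an edge (tree case: no tile terms). -/
def cVal (G : SimpleGraph V) (ℓ : Sym2 V → ℝ) (e : Sym2 V) : ℝ :=
  1 / ℓ e - ∑ᶠ w ∈ {w : V | w ∈ e}, 1 / mval G ℓ w

/-- Boundary vertices of a subgraph. -/
def bdry (G : SimpleGraph V) (H : G.Subgraph) : Set V :=
  {v ∈ H.verts | (H.neighborSet v).ncard < (G.neighborSet v).ncard}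

/-- Total (subgraph-)degree of the boundary of a subgraph. -/
def degBdry (G : SimpleGraph V) (H : G.Subgraph) : ℝ :=
  ∑ᶠ v ∈ bdry G H, ((H.neighborSet v).ncard : ℝ)

/-- Isoperimetric constant of a metric graph. -/
def alpha (G : SimpleGraph V) (ℓ : Sym2 V → ℝ) : ℝ :=
  sInf {x | ∃ H : G.Subgraph, H.verts.Finite ∧ H.Connected ∧ H.edgeSet.Nonempty ∧
    x = degBdry G H / mes ℓ H.edgeSet}

/-- The star-like subgraph generated by a vertex set `U`: its edges are all the
edges of `G` incident to some vertex of `U`. -/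
def starSubgraph (G : SimpleGraph V) (U : Set V) : G.Subgraph where
  verts := U ∪ {w | ∃ u ∈ U, G.Adj u w}
  Adj u w := G.Adj u w ∧ (u ∈ U ∨ w ∈ U)
  adj_sub h := h.1
  edge_vert h := h.2.elim (fun h' => Or.inl h') (fun h' => Or.inr ⟨_, h', h.1.symm⟩)
  symm := ⟨fun u w h => ⟨h.1.symm, h.2.symm⟩⟩

lemma incFin (G : SimpleGraph V) (hlf : ∀ v : V, (G.neighborSet v).Finite)
    (v : V) : (G.incidenceSet v).Finite := by
  apply Set.Finite.subset ((hlf v).image (fun w => s(v, w)))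
  rintro e ⟨he, hv⟩
  induction e using Sym2.ind with
  | _ a b =>
    rcases Sym2.mem_iff.mp hv with rfl | rfl
    · exact ⟨b, he, rfl⟩
    · exact ⟨a, he.symm, Sym2.eq_swap⟩

lemma mvalPos (G : SimpleGraph V) (hlf : ∀ v : V, (G.neighborSet v).Finite)
    (hdeg : ∀ v : V, 2 ≤ (G.neighborSet v).ncard)
    (ℓ : Sym2 V → ℝ) (hpos : ∀ e ∈ G.edgeSet, 0 < ℓ e) (v : V) : 0 < mval G ℓ v := by
  have hfin := incFin G hlf v
  obtain ⟨w, hw⟩ : (G.neighborSet v).Nonempty :=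
    Set.nonempty_of_ncard_ne_zero (by have := hdeg v; omega)
  rw [mval, ← Set.Finite.coe_toFinset hfin, finsum_mem_coe_finset]
  apply Finset.sum_pos
  · intro e he
    rw [Set.Finite.mem_toFinset] at he
    exact hpos e (G.incidenceSet_subset v he)
  · exact ⟨s(v, w), by rw [Set.Finite.mem_toFinset]; exact (G.mem_incidenceSet v w).mpr hw⟩

lemma noTwo (G : SimpleGraph V) (hacyc : G.IsAcyclic) {U : Set V}
    (hUconn : (G.induce U).Connected) {w u₁ u₂ : V} (hw : w ∉ U)
    (h1 : u₁ ∈ U) (h2 : u₂ ∈ U) (hne : u₁ ≠ u₂)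
    (ha1 : G.Adj w u₁) (ha2 : G.Adj w u₂) : False := by
  classical
  obtain ⟨q0⟩ := hUconn.preconnected ⟨u₁, h1⟩ ⟨u₂, h2⟩
  set emb : G.induce U ↪g G := SimpleGraph.Embedding.induce U with hemb
  set qp := q0.toPath with hqp
  set q' : G.Walk u₁ u₂ := qp.1.map emb.toHom with hq'def
  have hq' : q'.IsPath := SimpleGraph.Walk.map_isPath_of_injective emb.injective qp.2
  have hsupp : w ∉ q'.support := by
    intro hmem
    replace hmem : w ∈ (qp.1.map emb.toHom).support := hmem
    rw [SimpleGraph.Walk.support_map] at hmem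
    obtain ⟨x, _, rfl⟩ := List.mem_map.mp hmem
    exact hw x.2
  have hp2 : (SimpleGraph.Walk.cons ha1 q').IsPath := hq'.cons hsupp
  have heq := hacyc.path_unique (SimpleGraph.Path.singleton ha2) ⟨_, hp2⟩
  have hlen := congrArg (fun p : G.Path w u₂ => (p : G.Walk w u₂).length) heq
  simp only [SimpleGraph.Path.singleton, SimpleGraph.Walk.length_cons,
    SimpleGraph.Walk.length_nil, SimpleGraph.Walk.length_map] at hlen
  have hq'len : q'.length = qp.1.length := by
    rw [hq'def]; exact SimpleGraph.Walk.length_map _ _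
  have : (qp.1.length) = 0 := by omega
  have := SimpleGraph.Walk.eq_of_length_eq_zero this
  exact hne (congrArg Subtype.val this)

/-- For an infinite, locally finite metric tree with all degrees at least 2
and a star-like subgraph generated by a finite nonempty connected vertex set `U`,
`Σ_{e∈Ẽ} c(e)·ℓ(e) ≤ deg(∂G̃)`. -/
theorem statement_3 {V : Type*} [Infinite V] (G : SimpleGraph V)
    (hconn : G.Connected) (hacyc : G.IsAcyclic)
    (hlf : ∀ v : V, (G.neighborSet v).Finite)
    (hdeg : ∀ v : V, 2 ≤ (G.neighborSet v).ncard)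
    (ℓ : Sym2 V → ℝ) (hpos : ∀ e ∈ G.edgeSet, 0 < ℓ e)
    (U : Set V) (hUfin : U.Finite) (hUne : U.Nonempty) (hUconn : (G.induce U).Connected) :
    ∑ᶠ e ∈ (starSubgraph G U).edgeSet, cVal G ℓ e * ℓ e
      ≤ degBdry G (starSubgraph G U) := by
  classical
  set H := starSubgraph G U with hHdef
  have hadj : ∀ a b : V, H.Adj a b ↔ G.Adj a b ∧ (a ∈ U ∨ b ∈ U) := fun _ _ => Iff.rfl
  have hm := mvalPos G hlf hdeg ℓ hpos
  set N : Set V := H.verts \ U with hNdef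
  have hUsub : U ⊆ H.verts := fun u hu => Or.inl hu
  have hVfin : H.verts.Finite := by
    apply Set.Finite.union hUfin
    apply (hUfin.biUnion (fun u _ => hlf u)).subset
    rintro w ⟨u, hu, h⟩
    exact Set.mem_biUnion hu h
  have hNfin : N.Finite := hVfin.diff
  have hEfin : H.edgeSet.Finite := by
    apply (hUfin.biUnion (fun u _ => incFin G hlf u)).subset
    intro e he
    induction e using Sym2.ind with
    | _ a b =>
      rw [SimpleGraph.Subgraph.mem_edgeSet] at he
      rcases he.2 with h | h
      · exact Set.mem_biUnion h ((G.mem_incidenceSet a b).mpr he.1)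
      · refine Set.mem_biUnion h ?_
        rw [Sym2.eq_swap]
        exact (G.mem_incidenceSet b a).mpr he.1.symm
  set EF := hEfin.toFinset with hEFdef
  set UF := hUfin.toFinset with hUFdef
  set NF := hNfin.toFinset with hNFdef
  set WF := UF ∪ NF with hWFdef
  have hUNdisj : Disjoint UF NF := by
    rw [Finset.disjoint_left]
    intro a ha hna
    rw [hUFdef, Set.Finite.mem_toFinset] at ha
    rw [hNFdef, Set.Finite.mem_toFinset] at hna
    exact hna.2 ha
  have hWmem : ∀ v : V, v ∈ H.verts → v ∈ WF := by
    intro v hv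
    rw [hWFdef, Finset.mem_union, hUFdef, hNFdef, Set.Finite.mem_toFinset,
      Set.Finite.mem_toFinset]
    by_cases h : v ∈ U
    · exact Or.inl h
    · exact Or.inr ⟨hv, h⟩
  -- neighbor set facts
  have hnbrU : ∀ u ∈ U, H.neighborSet u = G.neighborSet u := by
    intro u hu
    ext w
    exact ⟨fun h => h.1, fun h => ⟨h, Or.inl hu⟩⟩
  have hnbrN : ∀ w ∉ U, H.neighborSet w = G.neighborSet w ∩ U := by
    intro w hw
    ext u
    constructor
    · rintro ⟨h, hor⟩
      exact ⟨h, hor.resolve_left hw⟩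
    · rintro ⟨h, hu⟩
      exact ⟨h, Or.inr hu⟩
  have hbdry : bdry G H = N := by
    ext v
    constructor
    · rintro ⟨hv, hlt⟩
      refine ⟨hv, fun hvU => ?_⟩
      rw [hnbrU v hvU] at hlt
      exact lt_irrefl _ hlt
    · rintro ⟨hv, hvU⟩
      refine ⟨hv, ?_⟩
      have hsub : H.neighborSet v ⊆ G.neighborSet v := fun u h => h.1
      have hex : ∃ u ∈ G.neighborSet v, u ∉ H.neighborSet v := by
        by_contra hall
        push_neg at hall
        obtain ⟨u₁, h1, u₂, h2, hne⟩ :=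
          (Set.one_lt_ncard (hlf v)).mp (lt_of_lt_of_le one_lt_two (hdeg v))
        have hu₁ : u₁ ∈ U := ((hall u₁ h1).2).resolve_left hvU
        have hu₂ : u₂ ∈ U := ((hall u₂ h2).2).resolve_left hvU
        exact noTwo G hacyc hUconn hvU hu₁ hu₂ hne h1 h2
      obtain ⟨u, hu, hnu⟩ := hex
      exact Set.ncard_lt_ncard ((Set.ssubset_iff_of_subset hsub).mpr ⟨u, hu, hnu⟩) (hlf v)
  have hnbrFin : ∀ w : V, (H.neighborSet w).Finite :=
    fun w => (hlf w).subset (fun u h => h.1)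
  -- the per-edge identity
  have hedge : ∀ e ∈ EF, cVal G ℓ e * ℓ e
      = 1 - ∑ w ∈ WF, (if w ∈ e then ℓ e / mval G ℓ w else 0) := by
    intro e he
    rw [hEFdef, Set.Finite.mem_toFinset] at he
    induction e using Sym2.ind with
    | _ a b =>
      have hAdj : H.Adj a b := he
      have hG : G.Adj a b := hAdj.1
      have hne : a ≠ b := hG.ne
      have ha : a ∈ WF := hWmem a (H.edge_vert hAdj)
      have hb : b ∈ WF := hWmem b (H.edge_vert hAdj.symm)
      have hpair : {w : V | w ∈ s(a, b)} = ({a, b} : Set V) := by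
        ext w; simp [Sym2.mem_iff]
      have hsum2 : ∑ᶠ w ∈ {w : V | w ∈ s(a, b)}, 1 / mval G ℓ w
          = 1 / mval G ℓ a + 1 / mval G ℓ b := by
        rw [hpair, finsum_mem_pair hne]
      have hsubWF : ({a, b} : Finset V) ⊆ WF := by
        intro x hx
        rcases Finset.mem_insert.mp hx with rfl | hx
        · exact ha
        · rw [Finset.mem_singleton] at hx; subst hx; exact hb
      have hidx : ∑ w ∈ WF, (if w ∈ s(a, b) then ℓ s(a, b) / mval G ℓ w else 0)
          = ℓ s(a, b) / mval G ℓ a + ℓ s(a, b) / mval G ℓ b := by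
        rw [← Finset.sum_subset hsubWF]
        · rw [Finset.sum_pair hne]
          simp [Sym2.mem_mk_left, Sym2.mem_mk_right]
        · intro x _ hx
          have : ¬ (x ∈ s(a, b)) := by
            rw [Sym2.mem_iff]
            rintro (rfl | rfl)
            · exact hx (Finset.mem_insert_self _ _)
            · exact hx (Finset.mem_insert_of_mem (Finset.mem_singleton_self _))
          rw [if_neg this]
      have hl : ℓ s(a, b) ≠ 0 := (hpos _ hG).ne'
      rw [cVal, hsum2, hidx]
      have hma := (hm a).ne'
      have hmb := (hm b).ne'
      field_simp
  -- sum over U gives exactly 1 each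
  have hinnerU : ∀ u ∈ UF, ∑ e ∈ EF, (if u ∈ e then ℓ e / mval G ℓ u else 0) = 1 := by
    intro u hu
    rw [hUFdef, Set.Finite.mem_toFinset] at hu
    have hfilt : EF.filter (fun e => u ∈ e) = (incFin G hlf u).toFinset := by
      ext e
      rw [Finset.mem_filter, hEFdef, Set.Finite.mem_toFinset, Set.Finite.mem_toFinset]
      constructor
      · rintro ⟨he, hue⟩
        exact ⟨H.edgeSet_subset he, hue⟩
      · rintro ⟨he, hue⟩
        refine ⟨?_, hue⟩
        induction e using Sym2.ind with
        | _ a b =>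
          rw [SimpleGraph.Subgraph.mem_edgeSet]
          rw [SimpleGraph.mem_edgeSet] at he
          rcases Sym2.mem_iff.mp hue with rfl | rfl
          · exact ⟨he, Or.inl hu⟩
          · exact ⟨he, Or.inr hu⟩
    have hsum : ∑ e ∈ EF, (if u ∈ e then ℓ e else 0) = mval G ℓ u := by
      rw [← Finset.sum_filter, hfilt, mval, ← finsum_mem_coe_finset,
        Set.Finite.coe_toFinset]
    calc ∑ e ∈ EF, (if u ∈ e then ℓ e / mval G ℓ u else 0)
        = (∑ e ∈ EF, (if u ∈ e then ℓ e else 0)) / mval G ℓ u := by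
          rw [Finset.sum_div]
          refine Finset.sum_congr rfl fun e _ => ?_
          split <;> simp
      _ = 1 := by rw [hsum, div_self (hm u).ne']
  have hinnerN : ∀ w ∈ NF, 0 ≤ ∑ e ∈ EF, (if w ∈ e then ℓ e / mval G ℓ w else 0) := by
    intro w _
    apply Finset.sum_nonneg
    intro e he
    rw [hEFdef, Set.Finite.mem_toFinset] at he
    have : 0 < ℓ e := hpos e (H.edgeSet_subset he)
    split
    · exact div_nonneg this.le (hm w).le
    · exact le_refl 0
  -- decomposition of edges of a subgraph
  have hrep : ∀ (e : Sym2 V), e ∈ H.edgeSet → ∀ w ∈ e, ∃ u, e = s(w, u) ∧ H.Adj w u := by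
    intro e
    induction e using Sym2.ind with
    | _ a b =>
      intro he w hww
      have hAdj : H.Adj a b := he
      rcases Sym2.mem_iff.mp hww with rfl | rfl
      · exact ⟨b, rfl, hAdj⟩
      · exact ⟨a, Sym2.eq_swap, hAdj.symm⟩
  set P : Sym2 V → Prop := fun e => ∀ v ∈ e, v ∈ U with hPdef
  have hEU : (EF.filter P).card ≤ UF.card := by
    haveI : Fintype U := hUfin.fintype
    haveI : Fintype (G.induce U).edgeSet := Fintype.ofFinite _
    have htree : (G.induce U).IsTree :=
      ⟨hUconn, fun v c hc => hacyc (c.map (SimpleGraph.Embedding.induce U).toHom)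
        (hc.map (SimpleGraph.Embedding.induce (G := G) U).injective)⟩
    have hEcard := htree.card_edgeFinset
    have hUcard : Fintype.card U = UF.card := by
      rw [← Set.toFinset_card, ← Set.ncard_eq_toFinset_card', Set.ncard_eq_toFinset_card U hUfin]
    have himg : EF.filter P ⊆ (G.induce U).edgeFinset.image (Sym2.map (Subtype.val : U → V)) := by
      intro e
      induction e using Sym2.ind with
      | _ a b =>
        intro he
        rw [Finset.mem_filter, hEFdef, Set.Finite.mem_toFinset] at he
        obtain ⟨heE, hP⟩ := he
        have ha : a ∈ U := hP a (Sym2.mem_mk_left a b)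
        have hb : b ∈ U := hP b (Sym2.mem_mk_right a b)
        have hAdj : H.Adj a b := heE
        have hadj' : (G.induce U).Adj ⟨a, ha⟩ ⟨b, hb⟩ := hAdj.1
        refine Finset.mem_image.mpr ⟨s(⟨a, ha⟩, ⟨b, hb⟩), ?_, ?_⟩
        · rw [SimpleGraph.mem_edgeFinset]; exact hadj'
        · rfl
    calc (EF.filter P).card
        ≤ ((G.induce U).edgeFinset.image (Sym2.map (Subtype.val : U → V))).card :=
          Finset.card_le_card himg
      _ ≤ (G.induce U).edgeFinset.card := Finset.card_image_le
      _ ≤ UF.card := by omega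
  set f : Sym2 V → V := fun e => if h : ∃ v, v ∈ e ∧ v ∉ U then h.choose else hUne.choose
    with hfdef
  have hf : ∀ e ∈ EF.filter (fun e => ¬ P e), f e ∈ e ∧ f e ∉ U := by
    intro e he
    rw [Finset.mem_filter] at he
    have hex : ∃ v, v ∈ e ∧ v ∉ U := by
      by_contra hno
      push_neg at hno
      exact he.2 (fun v hv => hno v hv)
    rw [hfdef]
    simp only [dif_pos hex]
    exact hex.choose_spec
  have hfN : ∀ e ∈ EF.filter (fun e => ¬ P e), f e ∈ NF := by
    intro e he
    have h1 := hf e he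
    rw [Finset.mem_filter, hEFdef, Set.Finite.mem_toFinset] at he
    rw [hNFdef, Set.Finite.mem_toFinset]
    obtain ⟨u, heq, hadjwu⟩ := hrep e he.1 (f e) h1.1
    exact ⟨H.edge_vert hadjwu, h1.2⟩
  have hfiber : ∀ w ∈ NF, ((EF.filter (fun e => ¬ P e)).filter (fun e => f e = w)).card
      = (H.neighborSet w).ncard := by
    intro w hw
    rw [hNFdef, Set.Finite.mem_toFinset] at hw
    have hwU : w ∉ U := hw.2
    have himgeq : (EF.filter (fun e => ¬ P e)).filter (fun e => f e = w)
        = (hnbrFin w).toFinset.image (fun u => s(w, u)) := by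
      ext e
      constructor
      · intro he
        rw [Finset.mem_filter] at he
        obtain ⟨heB, hfw⟩ := he
        have h1 := hf e heB
        rw [hfw] at h1
        rw [Finset.mem_filter, hEFdef, Set.Finite.mem_toFinset] at heB
        obtain ⟨u, heq, hadjwu⟩ := hrep e heB.1 w h1.1
        refine Finset.mem_image.mpr ⟨u, ?_, heq.symm⟩
        rw [Set.Finite.mem_toFinset]
        exact hadjwu
      · intro he
        obtain ⟨u, hu, heq⟩ := Finset.mem_image.mp he
        rw [Set.Finite.mem_toFinset] at hu
        have hadjwu : H.Adj w u := hu
        have huU : u ∈ U := hadjwu.2.resolve_left hwU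
        subst heq
        rw [Finset.mem_filter, Finset.mem_filter, hEFdef, Set.Finite.mem_toFinset]
        have hexw : ∃ v, v ∈ s(w, u) ∧ v ∉ U := ⟨w, Sym2.mem_mk_left w u, hwU⟩
        refine ⟨⟨hadjwu, fun hPP => hwU (hPP w (Sym2.mem_mk_left w u))⟩, ?_⟩
        rw [hfdef]
        simp only [dif_pos hexw]
        have hcs := hexw.choose_spec
        rcases Sym2.mem_iff.mp hcs.1 with h | h
        · exact h
        · exact absurd (by rw [h]; exact huU : hexw.choose ∈ U) hcs.2
    rw [himgeq, Finset.card_image_of_injOn, ← Set.ncard_eq_toFinset_card _ (hnbrFin w)]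
    intro u hu u' hu' heq
    rw [Set.Finite.coe_toFinset] at hu hu'
    rcases Sym2.eq_iff.mp heq with ⟨_, h⟩ | ⟨h1', h2'⟩
    · exact h
    · exact absurd h1'.symm (Ne.symm (hu'.1).ne)
  have hEB : (EF.filter (fun e => ¬ P e)).card = ∑ w ∈ NF, (H.neighborSet w).ncard := by
    rw [Finset.card_eq_sum_card_fiberwise hfN]
    exact Finset.sum_congr rfl hfiber
  have hsplit := Finset.card_filter_add_card_filter_not (s := EF) (p := P)
  have hcard : EF.card ≤ UF.card + ∑ w ∈ NF, (H.neighborSet w).ncard := by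
    rw [← hsplit, hEB]
    exact Nat.add_le_add_right hEU _
  have hdegB : degBdry G H = ∑ w ∈ NF, ((H.neighborSet w).ncard : ℝ) := by
    rw [degBdry, hbdry, ← finsum_mem_coe_finset]
    rw [hNFdef, Set.Finite.coe_toFinset]
  calc ∑ᶠ e ∈ H.edgeSet, cVal G ℓ e * ℓ e
      = ∑ e ∈ EF, cVal G ℓ e * ℓ e := by
        rw [← finsum_mem_coe_finset, hEFdef, Set.Finite.coe_toFinset]
    _ = ∑ e ∈ EF, (1 - ∑ w ∈ WF, (if w ∈ e then ℓ e / mval G ℓ w else 0)) :=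
        Finset.sum_congr rfl hedge
    _ = (EF.card : ℝ) - ∑ w ∈ WF, ∑ e ∈ EF, (if w ∈ e then ℓ e / mval G ℓ w else 0) := by
        rw [Finset.sum_sub_distrib, Finset.sum_const, nsmul_eq_mul, mul_one, Finset.sum_comm]
    _ ≤ (EF.card : ℝ) - UF.card := by
        have hsplitW : ∑ w ∈ WF, ∑ e ∈ EF, (if w ∈ e then ℓ e / mval G ℓ w else 0)
            = ∑ u ∈ UF, ∑ e ∈ EF, (if u ∈ e then ℓ e / mval G ℓ u else 0)
              + ∑ w ∈ NF, ∑ e ∈ EF, (if w ∈ e then ℓ e / mval G ℓ w else 0) := by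
          rw [hWFdef, Finset.sum_union hUNdisj]
        have h1 : ∑ u ∈ UF, ∑ e ∈ EF, (if u ∈ e then ℓ e / mval G ℓ u else 0)
            = (UF.card : ℝ) := by
          rw [Finset.sum_congr rfl hinnerU, Finset.sum_const, nsmul_eq_mul, mul_one]
        have h2 : 0 ≤ ∑ w ∈ NF, ∑ e ∈ EF, (if w ∈ e then ℓ e / mval G ℓ w else 0) :=
          Finset.sum_nonneg hinnerN
        rw [hsplitW, h1]
        linarith
    _ ≤ ∑ w ∈ NF, ((H.neighborSet w).ncard : ℝ) := by
        have hc : (EF.card : ℝ)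
            ≤ ((UF.card + ∑ w ∈ NF, (H.neighborSet w).ncard : ℕ) : ℝ) :=
          Nat.cast_le.mpr hcard
        push_cast at hc
        linarith
    _ = degBdry G H := hdegB.symm
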